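/- Euler's pentagonal number recurrence: for every positive integer n, the sum over all integers k of (−1)^k · p(n − k(3k+1)/2) equals 0, where p is the partition function and p(m) = 0 for m < 0. -/

import Mathlib

/-- The partition function `p(n)`. -/
def partitionCount (n : ℕ) : ℕ := Fintype.card (Nat.Partition n)

/-- The smallest part of a partition (`0` for the empty partition). -/
noncomputable def Nat.Partition.smallestPart {n : ℕ} (π : n.Partition) : ℕ := sInf {a | a ∈ π.parts}

/-- `spt(n)`: the total number of smallest parts in the partitions of `n`. -/
noncomputable def spt (n : ℕ) : ℕ := ∑ π : Nat.Partition n, π.parts.count π.smallestPart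

/-- The Kronecker symbol `(12 | m)`. -/
def chi12 (m : ℕ) : ℤ :=
  if m % 12 = 1 ∨ m % 12 = 11 then 1 else if m % 12 = 5 ∨ m % 12 = 7 then -1 else 0

/-- `a(n) = −∑_{ab = 6n, 0 < a < b} (12 | b² − a²) · a`. -/
def sptRHS (n : ℕ) : ℤ :=
  - ∑ a ∈ (6 * n).divisors.filter (fun a => a < 6 * n / a),
      chi12 ((6 * n / a) ^ 2 - a ^ 2) * a

/-- `s(k) = ∑_{d ∣ k} min(d, k/d)`. -/
def sdiv (k : ℕ) : ℕ := ∑ d ∈ k.divisors, min d (k / d)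

/-- `b(n)` from Theorem 2. -/
def bfun (n : ℕ) : ℤ :=
  if n % 2 = 1 then (-1) ^ (n + 1) * (2 * sdiv n)
  else if n % 4 = 0 then (-1) ^ (n + 1) * (4 * sdiv (n / 4))
  else 0

/-- The number of overpartitions of `n`: each partition together with a choice of
a set of part sizes to overline (the first occurrence of each chosen size). -/
def overpartitionCount (n : ℕ) : ℕ :=
  ∑ π : Nat.Partition n, π.parts.toFinset.powerset.card

/-- `sptbar(n)`: the number of odd smallest parts in the overpartitions of `n`. -/
noncomputable def sptbar (n : ℕ) : ℕ :=
  ∑ π : Nat.Partition n, ∑ _S ∈ π.parts.toFinset.powerset,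
    if Odd π.smallestPart then π.parts.count π.smallestPart else 0

/-- `M2(n)`: the number of partitions of `n` without repeated odd parts. -/
def M2 (n : ℕ) : ℕ :=
  (Finset.univ.filter fun π : Nat.Partition n =>
    ∀ i ∈ π.parts, Odd i → π.parts.count i ≤ 1).card

/-- `M2spt(n)`: the number of smallest parts in those partitions of `n` without
repeated odd parts whose smallest part is even. -/
noncomputable def M2spt (n : ℕ) : ℕ :=
  ∑ π : Nat.Partition n,
    if (∀ i ∈ π.parts, Odd i → π.parts.count i ≤ 1) ∧ Even π.smallestPart ∧ π.parts ≠ 0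
    then π.parts.count π.smallestPart else 0

/-- `σ(n)`: sum of divisors. -/
def sigma1 (n : ℕ) : ℕ := ∑ d ∈ n.divisors, d

/-- `c(n) = σ(n) − σ(n/2) − s(2n)/2 + s(n/2)`, with `σ`, `s` vanishing at non-integers. -/
def cfun (n : ℕ) : ℚ :=
  (sigma1 n : ℚ) - (if 2 ∣ n then (sigma1 (n / 2) : ℚ) else 0)
    - (sdiv (2 * n) : ℚ) / 2 + (if 2 ∣ n then (sdiv (n / 2) : ℚ) else 0)

/-- `p` extended by zero to `ℤ`. -/
def pZ (m : ℤ) : ℤ := if 0 ≤ m then (partitionCount m.toNat : ℤ) else 0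

/-- `spt` extended by zero to `ℤ`. -/
noncomputable def sptZ (m : ℤ) : ℤ := if 0 ≤ m then (spt m.toNat : ℤ) else 0

/-- `sptbar` extended by zero to `ℤ`. -/
noncomputable def sptbarZ (m : ℤ) : ℤ := if 0 ≤ m then (sptbar m.toNat : ℤ) else 0

/-- `M2spt` extended by zero to `ℤ`, valued in `ℚ`. -/
noncomputable def M2sptQ (m : ℤ) : ℚ := if 0 ≤ m then (M2spt m.toNat : ℚ) else 0

namespace EulerPent
open Finset Multiset

def gk (k : ℤ) : ℤ := k * (3 * k + 1) / 2

lemma two_gk (k : ℤ) : 2 * gk k = k * (3 * k + 1) := by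
  have h : (2:ℤ) ∣ k * (3 * k + 1) := by
    rcases Int.even_or_odd k with ⟨m, rfl⟩ | ⟨m, rfl⟩
    · exact ⟨m * (3*(m+m)+1), by ring⟩
    · exact ⟨(2*m+1)*(3*m+2), by ring⟩
  rw [gk, Int.mul_ediv_cancel' h]

lemma gk_succ (k : ℤ) : gk (k + 1) = gk k + (3 * k + 2) := by
  have h1 := two_gk k; have h2 := two_gk (k + 1); nlinarith [h1, h2]

lemma gk_pred (k : ℤ) : gk (k - 1) = gk k - (3 * k - 1) := by
  have h1 := two_gk k; have h2 := two_gk (k - 1); nlinarith [h1, h2]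

lemma gk_zero : gk 0 = 0 := rfl

lemma abs_le_of_gk_le {k : ℤ} {n : ℕ} (h : gk k ≤ n) : -(n:ℤ) ≤ k ∧ k ≤ n := by
  have h2 := two_gk k
  constructor
  · by_contra hc; push_neg at hc; nlinarith
  · by_contra hc; push_neg at hc; nlinarith

def PF (m : ℕ) : Finset (Multiset ℕ) := Finset.univ.image (fun π : Nat.Partition m => π.parts)

lemma mem_PF {m : ℕ} {μ : Multiset ℕ} : μ ∈ PF m ↔ (∀ x ∈ μ, 0 < x) ∧ μ.sum = m := by
  constructor
  · intro h
    simp only [PF, Finset.mem_image, Finset.mem_univ, true_and] at h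
    obtain ⟨π, rfl⟩ := h
    exact ⟨fun x hx => π.parts_pos hx, π.parts_sum⟩
  · rintro ⟨h1, h2⟩
    simp only [PF, Finset.mem_image, Finset.mem_univ, true_and]
    exact ⟨⟨μ, fun {i} hi => h1 i hi, h2⟩, rfl⟩

lemma card_PF (m : ℕ) : (PF m).card = partitionCount m := by
  rw [PF, Finset.card_image_of_injective _ (fun a b h => Nat.Partition.ext h),
    Finset.card_univ, partitionCount]

/-- The index set of the involution. -/
noncomputable def S (n : ℕ) : Finset (ℤ × Multiset ℕ) :=
  ((Finset.Icc (-(n:ℤ)) (n:ℤ)).filter fun k => gk k ≤ (n:ℤ)).biUnion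
    fun k => (PF ((n:ℤ) - gk k).toNat).image fun μ => (k, μ)

lemma mem_S {n : ℕ} {x : ℤ × Multiset ℕ} :
    x ∈ S n ↔ gk x.1 ≤ (n:ℤ) ∧ (∀ p ∈ x.2, 0 < p) ∧ (x.2.sum : ℤ) = (n:ℤ) - gk x.1 := by
  obtain ⟨k, μ⟩ := x
  simp only [S, Finset.mem_biUnion, Finset.mem_filter, Finset.mem_Icc, Finset.mem_image, mem_PF]
  constructor
  · rintro ⟨k', ⟨⟨hk1, hk2⟩, hg⟩, μ', ⟨hpos, hsum⟩, heq⟩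
    cases heq
    refine ⟨hg, hpos, ?_⟩
    rw [hsum, Int.toNat_of_nonneg (by omega)]
  · rintro ⟨hg, hpos, hsum⟩
    have hk := abs_le_of_gk_le hg
    exact ⟨k, ⟨⟨hk.1, hk.2⟩, hg⟩, μ, ⟨hpos, by rw [← Int.toNat_natCast μ.sum, hsum]⟩, rfl⟩

/-- The Bressoud–Zeilberger involution. -/
def phi (x : ℤ × Multiset ℕ) : ℤ × Multiset ℕ :=
  if x.2 = 0 ∧ x.1 < 0 then (x.1 + 1, Multiset.replicate (-3 * x.1 - 2).toNat 1)
  else if (x.2.sup : ℤ) ≤ (Multiset.card x.2 : ℤ) + 3 * x.1 then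
    (x.1 - 1, ((x.2.map (· - 1)) + {((Multiset.card x.2 : ℤ) + 3 * x.1 - 1).toNat}).filter (0 < ·))
  else (x.1 + 1, (x.2.erase x.2.sup).map (· + 1) +
    Multiset.replicate ((x.2.sup : ℤ) - Multiset.card x.2 - 3 * x.1 - 1).toNat 1)

lemma phi_eq_special {j : ℤ} {μ : Multiset ℕ} (h : μ = 0) (hj : j < 0) :
    phi (j, μ) = (j + 1, Multiset.replicate (-3 * j - 2).toNat 1) := by
  rw [phi, if_pos ⟨h, hj⟩]

lemma phi_eq_one {j : ℤ} {μ : Multiset ℕ} (h1 : ¬(μ = 0 ∧ j < 0))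
    (h2 : (μ.sup : ℤ) ≤ (Multiset.card μ : ℤ) + 3 * j) :
    phi (j, μ) = (j - 1,
      ((μ.map (· - 1)) + {((Multiset.card μ : ℤ) + 3 * j - 1).toNat}).filter (0 < ·)) := by
  rw [phi, if_neg h1, if_pos h2]

lemma phi_eq_two {j : ℤ} {μ : Multiset ℕ} (h1 : ¬(μ = 0 ∧ j < 0))
    (h2 : ¬((μ.sup : ℤ) ≤ (Multiset.card μ : ℤ) + 3 * j)) :
    phi (j, μ) = (j + 1, (μ.erase μ.sup).map (· + 1) +
      Multiset.replicate ((μ.sup : ℤ) - Multiset.card μ - 3 * j - 1).toNat 1) := by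
  rw [phi, if_neg h1, if_neg h2]

lemma phi_fst (x : ℤ × Multiset ℕ) : (phi x).1 = x.1 + 1 ∨ (phi x).1 = x.1 - 1 := by
  rw [phi]; split_ifs <;> simp


lemma sup_mem {μ : Multiset ℕ} (h : μ ≠ 0) : μ.sup ∈ μ := by
  induction μ using Multiset.induction_on with
  | empty => exact absurd rfl h
  | cons a s ih =>
    rw [Multiset.sup_cons]
    rcases eq_or_ne s 0 with rfl | hs
    · simp
    · rcases le_total a s.sup with hle | hle
      · rw [sup_eq_right.mpr hle]
        exact Multiset.mem_cons_of_mem (ih hs)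
      · rw [sup_eq_left.mpr hle]
        exact Multiset.mem_cons_self a s

lemma card_le_sum {μ : Multiset ℕ} (h : ∀ x ∈ μ, 0 < x) : μ.card ≤ μ.sum := by
  induction μ using Multiset.induction_on with
  | empty => simp
  | cons a s ih =>
    have ha : 0 < a := h a (Multiset.mem_cons_self a s)
    have ihs := ih (fun x hx => h x (Multiset.mem_cons_of_mem hx))
    simp only [Multiset.sum_cons, Multiset.card_cons]
    omega

lemma sum_map_pred {μ : Multiset ℕ} (h : ∀ x ∈ μ, 0 < x) :
    (μ.map (· - 1)).sum = μ.sum - μ.card := by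
  induction μ using Multiset.induction_on with
  | empty => simp
  | cons a s ih =>
    have ha : 0 < a := h a (Multiset.mem_cons_self a s)
    have hs := fun x hx => h x (Multiset.mem_cons_of_mem hx)
    have ihs := ih hs
    have hcs := card_le_sum hs
    simp only [Multiset.map_cons, Multiset.sum_cons, Multiset.card_cons]
    omega

lemma sum_map_succ (μ : Multiset ℕ) :
    (μ.map (· + 1)).sum = μ.sum + μ.card := by
  induction μ using Multiset.induction_on with
  | empty => simp
  | cons a s ih =>
    simp only [Multiset.map_cons, Multiset.sum_cons, Multiset.card_cons]
    omega

lemma sum_filter_pos (μ : Multiset ℕ) : (μ.filter (0 < ·)).sum = μ.sum := by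
  induction μ using Multiset.induction_on with
  | empty => simp
  | cons a s ih =>
    rw [Multiset.filter_cons, Multiset.sum_add, ih, Multiset.sum_cons]
    rcases Nat.eq_zero_or_pos a with rfl | ha
    · simp
    · simp [ha]

lemma rebuild (μ : Multiset ℕ) (h : ∀ x ∈ μ, 0 < x) :
    (((μ.map (· - 1)).filter (0 < ·)).map (· + 1)) + Multiset.replicate (μ.count 1) 1 = μ := by
  induction μ using Multiset.induction_on with
  | empty => simp
  | cons a s ih =>
    have ha : 0 < a := h a (Multiset.mem_cons_self a s)
    have ihs := ih (fun x hx => h x (Multiset.mem_cons_of_mem hx))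
    rcases eq_or_ne a 1 with rfl | ha1
    · rw [Multiset.map_cons, Multiset.filter_cons]
      simp only [Nat.sub_self, lt_self_iff_false, if_false, zero_add,
        Multiset.count_cons_self, Multiset.replicate_succ, Multiset.add_cons, ihs]
    · have ha2 : 0 < a - 1 := by omega
      rw [Multiset.map_cons, Multiset.filter_cons]
      simp only [ha2, if_pos, Multiset.singleton_add, Multiset.map_cons, Multiset.cons_add,
        Multiset.count_cons_of_ne (Ne.symm ha1), show a - 1 + 1 = a by omega, ihs]

lemma card_rebuild (μ : Multiset ℕ) (h : ∀ x ∈ μ, 0 < x) :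
    ((μ.map (· - 1)).filter (0 < ·)).card + μ.count 1 = μ.card := by
  have := congrArg Multiset.card (rebuild μ h)
  simpa using this


lemma phi_mem {n : ℕ} (hn : 0 < n) {x : ℤ × Multiset ℕ} (hx : x ∈ S n) : phi x ∈ S n := by
  obtain ⟨j, μ⟩ := x
  rw [mem_S] at hx ⊢
  obtain ⟨hg, hpos, hsum⟩ := hx
  dsimp only at hg hpos hsum
  by_cases h1 : μ = 0 ∧ j < 0
  · -- special case: empty partition, negative index
    obtain ⟨rfl, hj⟩ := h1
    rw [phi_eq_special rfl hj]
    dsimp only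
    have hgj : gk j = (n:ℤ) := by simp only [Multiset.sum_zero, Nat.cast_zero] at hsum; omega
    have hs := gk_succ j
    have hsumr : (((Multiset.replicate (-3*j-2).toNat 1).sum : ℕ) : ℤ) = -3*j - 2 := by
      rw [Multiset.sum_replicate, smul_eq_mul, mul_one, Int.toNat_of_nonneg (by omega)]
    refine ⟨by omega, ?_, by rw [hsumr]; omega⟩
    intro p hp
    rw [Multiset.eq_of_mem_replicate hp]; omega
  · by_cases h2 : (μ.sup : ℤ) ≤ (Multiset.card μ : ℤ) + 3 * j
    · -- case 1
      rw [phi_eq_one h1 h2]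
      dsimp only
      have hb : 0 ≤ (Multiset.card μ : ℤ) + 3 * j - 1 := by
        rcases eq_or_ne μ 0 with rfl | hμ
        · have hj0 : ¬ j < 0 := fun hc => h1 ⟨rfl, hc⟩
          have hgj : gk j = (n:ℤ) := by
            simp only [Multiset.sum_zero, Nat.cast_zero] at hsum; omega
          have : j ≠ 0 := by rintro rfl; rw [gk_zero] at hgj; omega
          simp only [Multiset.card_zero, Nat.cast_zero]
          omega
        · obtain ⟨p, hp⟩ := Multiset.exists_mem_of_ne_zero hμ
          have h1p := hpos p hp
          have hps := Multiset.le_sup hp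
          have : (1:ℤ) ≤ (μ.sup : ℤ) := by exact_mod_cast le_trans h1p hps
          omega
      have hbz : (((((Multiset.card μ : ℤ) + 3 * j - 1).toNat) : ℕ) : ℤ)
          = (Multiset.card μ : ℤ) + 3 * j - 1 := Int.toNat_of_nonneg hb
      have e1 : (((μ.map (· - 1)).sum : ℕ) : ℤ) = (μ.sum : ℤ) - Multiset.card μ := by
        rw [sum_map_pred hpos, Nat.cast_sub (card_le_sum hpos)]
      have hsum' : (((((μ.map (· - 1)) + {((Multiset.card μ : ℤ) + 3 * j - 1).toNat}).filter
          (0 < ·)).sum : ℕ) : ℤ) = (n:ℤ) - gk (j - 1) := by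
        rw [sum_filter_pos, Multiset.sum_add, Multiset.sum_singleton, Nat.cast_add, e1, hbz,
          gk_pred]
        omega
      have hnn := Int.natCast_nonneg ((((μ.map (· - 1))
        + {((Multiset.card μ : ℤ) + 3 * j - 1).toNat}).filter (0 < ·)).sum)
      exact ⟨by rw [hsum'] at hnn; omega, fun p hp => Multiset.of_mem_filter hp, hsum'⟩
    · -- case 2
      rw [phi_eq_two h1 h2]
      dsimp only
      push_neg at h2
      have hμ : μ ≠ 0 := by
        rintro rfl
        have hj0 : ¬ j < 0 := fun hc => h1 ⟨rfl, hc⟩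
        simp at h2
        omega
      have hmem := sup_mem hμ
      have hsup1 : 0 < μ.sup := hpos _ hmem
      have hcard1 : 0 < Multiset.card μ := Multiset.card_pos.mpr hμ
      have hm : 0 ≤ (μ.sup : ℤ) - Multiset.card μ - 3 * j - 1 := by omega
      have hmz : ((((μ.sup : ℤ) - Multiset.card μ - 3 * j - 1).toNat : ℕ) : ℤ)
          = (μ.sup : ℤ) - Multiset.card μ - 3 * j - 1 := Int.toNat_of_nonneg hm
      have e2 : (μ.sum : ℤ) = (μ.sup : ℤ) + ((μ.erase μ.sup).sum : ℤ) := by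
        conv_lhs => rw [← Multiset.cons_erase hmem]
        rw [Multiset.sum_cons]; push_cast; ring
      have e3 : ((Multiset.card (μ.erase μ.sup)) : ℤ) = (Multiset.card μ : ℤ) - 1 := by
        rw [Multiset.card_erase_of_mem hmem, Nat.pred_eq_sub_one, Nat.cast_sub hcard1]
        simp
      have e4 : ((((μ.erase μ.sup).map (· + 1)).sum : ℕ) : ℤ)
          = ((μ.erase μ.sup).sum : ℤ) + (Multiset.card (μ.erase μ.sup) : ℤ) := by
        rw [sum_map_succ]; push_cast; ring
      have e5 : (((Multiset.replicate ((μ.sup : ℤ) - Multiset.card μ - 3 * j - 1).toNat 1).sum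
          : ℕ) : ℤ) = (((μ.sup : ℤ) - Multiset.card μ - 3 * j - 1).toNat : ℤ) := by
        rw [Multiset.sum_replicate]; simp
      have hsum2 : ((((μ.erase μ.sup).map (· + 1)
          + Multiset.replicate ((μ.sup : ℤ) - Multiset.card μ - 3 * j - 1).toNat 1).sum : ℕ) : ℤ)
          = (n:ℤ) - gk (j + 1) := by
        rw [Multiset.sum_add, Nat.cast_add, e4, e5, hmz, gk_succ]
        omega
      have hnn := Int.natCast_nonneg (((μ.erase μ.sup).map (· + 1)
        + Multiset.replicate ((μ.sup : ℤ) - Multiset.card μ - 3 * j - 1).toNat 1).sum)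
      refine ⟨by rw [hsum2] at hnn; omega, ?_, hsum2⟩
      intro p hp
      rcases Multiset.mem_add.1 hp with hp | hp
      · obtain ⟨q, _, rfl⟩ := Multiset.mem_map.1 hp
        omega
      · rw [Multiset.eq_of_mem_replicate hp]; omega

lemma phi_phi {n : ℕ} (hn : 0 < n) {x : ℤ × Multiset ℕ} (hx : x ∈ S n) : phi (phi x) = x := by
  obtain ⟨j, μ⟩ := x
  rw [mem_S] at hx
  obtain ⟨hg, hpos, hsum⟩ := hx
  dsimp only at hg hpos hsum
  by_cases h1 : μ = 0 ∧ j < 0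
  · -- special case
    obtain ⟨rfl, hj⟩ := h1
    rw [phi_eq_special rfl hj]
    have hgj : gk j = (n:ℤ) := by simp only [Multiset.sum_zero, Nat.cast_zero] at hsum; omega
    set M : ℕ := (-3*j-2).toNat with hM
    have hMz : (M:ℤ) = -3*j-2 := Int.toNat_of_nonneg (by omega)
    have hM1 : 1 ≤ M := by omega
    have hne : Multiset.replicate M 1 ≠ 0 := by
      intro hc
      have := congrArg Multiset.card hc
      rw [Multiset.card_replicate, Multiset.card_zero] at this
      omega
    have hcard : Multiset.card (Multiset.replicate M 1) = M := Multiset.card_replicate _ _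
    have hsupr : (Multiset.replicate M 1).sup = 1 := by
      refine le_antisymm
        (Multiset.sup_le.2 fun b hb => le_of_eq (Multiset.eq_of_mem_replicate hb)) ?_
      exact Multiset.le_sup (Multiset.mem_replicate.2 ⟨by omega, rfl⟩)
    have hcond : ((((Multiset.replicate M 1).sup : ℕ)) : ℤ)
        ≤ (Multiset.card (Multiset.replicate M 1) : ℤ) + 3 * (j+1) := by
      rw [hsupr, hcard]; omega
    rw [phi_eq_one (by rintro ⟨hc, -⟩; exact hne hc) hcond]
    have hb0 : ((Multiset.card (Multiset.replicate M 1) : ℤ) + 3 * (j+1) - 1).toNat = 0 := by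
      rw [hcard]; omega
    refine Prod.ext (by dsimp only; ring) ?_
    dsimp only
    rw [hb0, Multiset.map_replicate]
    apply Multiset.filter_eq_nil.2
    intro a ha
    rcases Multiset.mem_add.1 ha with ha | ha
    · rw [Multiset.eq_of_mem_replicate ha]; omega
    · rw [Multiset.mem_singleton.1 ha]; omega
  · by_cases h2 : (μ.sup : ℤ) ≤ (Multiset.card μ : ℤ) + 3 * j
    · -- case 1 then back
      rw [phi_eq_one h1 h2]
      have hb : 0 ≤ (Multiset.card μ : ℤ) + 3 * j - 1 := by
        rcases eq_or_ne μ 0 with rfl | hμ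
        · have hj0 : ¬ j < 0 := fun hc => h1 ⟨rfl, hc⟩
          have hgj : gk j = (n:ℤ) := by
            simp only [Multiset.sum_zero, Nat.cast_zero] at hsum; omega
          have : j ≠ 0 := by rintro rfl; rw [gk_zero] at hgj; omega
          simp only [Multiset.card_zero, Nat.cast_zero]
          omega
        · obtain ⟨p, hp⟩ := Multiset.exists_mem_of_ne_zero hμ
          have h1p := hpos p hp
          have hps := Multiset.le_sup hp
          have : (1:ℤ) ≤ (μ.sup : ℤ) := by exact_mod_cast le_trans h1p hps
          omega
      set b : ℕ := ((Multiset.card μ : ℤ) + 3 * j - 1).toNat with hbdef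
      have hbz : (b:ℤ) = (Multiset.card μ : ℤ) + 3 * j - 1 := Int.toNat_of_nonneg hb
      by_cases hb0 : b = 0
      · -- all parts equal 1, result empty, goes through the special case
        have hall : ∀ p ∈ μ, p = 1 := by
          intro p hp
          have h1p := hpos p hp
          have hps : (p:ℤ) ≤ (μ.sup : ℤ) := by exact_mod_cast Multiset.le_sup hp
          omega
        have hμrep : μ = Multiset.replicate (Multiset.card μ) 1 :=
          Multiset.eq_replicate.2 ⟨rfl, hall⟩
        have hμ' : ((μ.map (· - 1)) + {b}).filter (0 < ·) = 0 := by
          apply Multiset.filter_eq_nil.2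
          intro a ha
          rcases Multiset.mem_add.1 ha with ha | ha
          · obtain ⟨q, hq, rfl⟩ := Multiset.mem_map.1 ha
            rw [hall q hq]; omega
          · rw [Multiset.mem_singleton.1 ha, hb0]; omega
        have hj0 : j - 1 < 0 := by
          have : (0:ℤ) ≤ (Multiset.card μ : ℤ) := Int.natCast_nonneg _
          omega
        rw [hμ', phi_eq_special rfl hj0]
        refine Prod.ext (by dsimp only; ring) ?_
        dsimp only
        conv_rhs => rw [hμrep]
        congr 1
        omega
      · -- result nonempty, goes through case 2
        have hb1 : 0 < b := Nat.pos_of_ne_zero hb0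
        have hμ'eq : ((μ.map (· - 1)) + {b}).filter (0 < ·)
            = b ::ₘ (μ.map (· - 1)).filter (0 < ·) := by
          rw [Multiset.filter_add, Multiset.filter_singleton, if_pos hb1, add_comm,
            Multiset.singleton_add]
        have hsub : ∀ c ∈ (μ.map (· - 1)).filter (0 < ·), c ≤ b := by
          intro c hc
          obtain ⟨hc1, hc2⟩ := Multiset.mem_filter.1 hc
          obtain ⟨q, hq, rfl⟩ := Multiset.mem_map.1 hc1
          have hqs : (q:ℤ) ≤ (μ.sup : ℤ) := by exact_mod_cast Multiset.le_sup hq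
          omega
        have hμ'ne : b ::ₘ (μ.map (· - 1)).filter (0 < ·) ≠ 0 := Multiset.cons_ne_zero
        have hsupμ' : (b ::ₘ (μ.map (· - 1)).filter (0 < ·)).sup = b := by
          rw [Multiset.sup_cons]
          exact sup_eq_left.2 (Multiset.sup_le.2 hsub)
        have hcardμ' : Multiset.card (b ::ₘ (μ.map (· - 1)).filter (0 < ·))
            = ((μ.map (· - 1)).filter (0 < ·)).card + 1 := Multiset.card_cons _ _
        have hcr := card_rebuild μ hpos
        have hcrz : ((((μ.map (· - 1)).filter (0 < ·)).card : ℕ) : ℤ) + (μ.count 1 : ℤ)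
            = (Multiset.card μ : ℤ) := by exact_mod_cast hcr
        have hcond2 : ¬ (((b ::ₘ (μ.map (· - 1)).filter (0 < ·)).sup : ℤ)
            ≤ (Multiset.card (b ::ₘ (μ.map (· - 1)).filter (0 < ·)) : ℤ) + 3 * (j - 1)) := by
          rw [hsupμ', hcardμ']
          push_cast
          omega
        rw [hμ'eq, phi_eq_two (fun hc => hμ'ne hc.1) hcond2]
        refine Prod.ext (by dsimp only; ring) ?_
        dsimp only
        rw [hsupμ', Multiset.erase_cons_head]
        have hm' : ((b : ℤ) - Multiset.card (b ::ₘ (μ.map (· - 1)).filter (0 < ·))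
            - 3 * (j - 1) - 1).toNat = μ.count 1 := by
          rw [hcardμ']
          push_cast
          omega
        rw [hm']
        exact rebuild μ hpos
    · -- case 2 then back
      rw [phi_eq_two h1 h2]
      push_neg at h2
      have hμ : μ ≠ 0 := by
        rintro rfl
        have hj0 : ¬ j < 0 := fun hc => h1 ⟨rfl, hc⟩
        simp at h2
        omega
      have hmem := sup_mem hμ
      have hsup1 : 0 < μ.sup := hpos _ hmem
      have hcard1 : 0 < Multiset.card μ := Multiset.card_pos.mpr hμ
      have hm : 0 ≤ (μ.sup : ℤ) - Multiset.card μ - 3 * j - 1 := by omega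
      set m : ℕ := ((μ.sup : ℤ) - Multiset.card μ - 3 * j - 1).toNat with hmdef
      have hmz : (m : ℤ) = (μ.sup : ℤ) - Multiset.card μ - 3 * j - 1 := Int.toNat_of_nonneg hm
      have e3 : ((Multiset.card (μ.erase μ.sup)) : ℤ) = (Multiset.card μ : ℤ) - 1 := by
        rw [Multiset.card_erase_of_mem hmem, Nat.pred_eq_sub_one, Nat.cast_sub hcard1]
        simp
      have hcard' : (Multiset.card ((μ.erase μ.sup).map (· + 1) + Multiset.replicate m 1) : ℤ)
          = (μ.sup : ℤ) - 3 * j - 2 := by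
        rw [Multiset.card_add, Multiset.card_map]
        push_cast [Multiset.card_replicate]
        omega
      by_cases hμ'0 : (μ.erase μ.sup).map (· + 1) + Multiset.replicate m 1 = 0
      · -- single-part partition, empty intermediate
        have hc0 : (Multiset.card ((μ.erase μ.sup).map (· + 1) + Multiset.replicate m 1) : ℤ)
            = 0 := by rw [hμ'0]; simp
        have ha32 : (μ.sup : ℤ) = 3 * j + 2 := by omega
        have hj0 : 0 ≤ j := by omega
        have hcond : (((0 : Multiset ℕ).sup : ℤ) ≤ (Multiset.card (0 : Multiset ℕ) : ℤ)
            + 3 * (j + 1)) := by simp; omega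
        rw [hμ'0, phi_eq_one (by rintro ⟨-, hc⟩; omega) hcond]
        refine Prod.ext (by dsimp only; ring) ?_
        dsimp only
        have hbv : ((Multiset.card (0 : Multiset ℕ) : ℤ) + 3 * (j + 1) - 1).toNat = μ.sup := by
          simp only [Multiset.card_zero, Nat.cast_zero]
          omega
        rw [hbv]
        have hcard_er : Multiset.card ((μ.erase μ.sup).map (· + 1)) = 0 ∧ m = 0 := by
          have := congrArg Multiset.card hμ'0
          rw [Multiset.card_add, Multiset.card_replicate, Multiset.card_zero] at this
          omega
        have hcardμ : Multiset.card μ = 1 := by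
          rw [Multiset.card_map] at hcard_er
          have := e3
          omega
        obtain ⟨c, hc⟩ := Multiset.card_eq_one.1 hcardμ
        have hcs : μ.sup = c := by
          refine le_antisymm (Multiset.sup_le.2 fun p hp => ?_)
            (Multiset.le_sup (by rw [hc]; exact Multiset.mem_singleton_self c))
          rw [hc] at hp
          rw [Multiset.mem_singleton.1 hp]
        have hc1 : 0 < c := hcs ▸ hsup1
        rw [hcs, hc]
        simp [Multiset.filter_singleton, hc1]
      · -- nonempty intermediate
        have hboundN : ∀ c ∈ (μ.erase μ.sup).map (· + 1) + Multiset.replicate m 1,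
            c ≤ μ.sup + 1 := by
          intro c hc
          rcases Multiset.mem_add.1 hc with hc | hc
          · obtain ⟨q, hq, rfl⟩ := Multiset.mem_map.1 hc
            have := Multiset.le_sup (Multiset.mem_of_mem_erase hq)
            omega
          · rw [Multiset.eq_of_mem_replicate hc]; omega
        have hcond : ((((μ.erase μ.sup).map (· + 1) + Multiset.replicate m 1).sup : ℤ)
            ≤ (Multiset.card ((μ.erase μ.sup).map (· + 1) + Multiset.replicate m 1) : ℤ)
              + 3 * (j + 1)) := by
          have hs := Multiset.sup_le.2 hboundN
          have hs' : ((((μ.erase μ.sup).map (· + 1) + Multiset.replicate m 1).sup : ℕ) : ℤ)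
              ≤ (μ.sup : ℤ) + 1 := by exact_mod_cast hs
          omega
        rw [phi_eq_one (fun hc => hμ'0 hc.1) hcond]
        refine Prod.ext (by dsimp only; ring) ?_
        dsimp only
        have hbv : ((Multiset.card ((μ.erase μ.sup).map (· + 1) + Multiset.replicate m 1) : ℤ)
            + 3 * (j + 1) - 1).toNat = μ.sup := by omega
        rw [hbv, Multiset.map_add, Multiset.map_map, Multiset.map_replicate]
        have hid : Multiset.map ((· - 1) ∘ (· + 1)) (μ.erase μ.sup) = μ.erase μ.sup := by
          rw [show ((· - 1) ∘ (· + 1) : ℕ → ℕ) = id from funext fun x => by simp]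
          exact Multiset.map_id _
        rw [hid, Multiset.filter_add, Multiset.filter_add,
          Multiset.filter_eq_self.2 (fun a ha => hpos a (Multiset.mem_of_mem_erase ha)),
          Multiset.filter_eq_nil.2
            (fun a ha => by rw [Multiset.eq_of_mem_replicate ha]; omega),
          Multiset.filter_singleton, if_pos hsup1, add_zero, add_comm,
          Multiset.singleton_add, Multiset.cons_erase hmem]

lemma phi_sign (x : ℤ × Multiset ℕ) :
    ((x.1.negOnePow : ℤ)) + (((phi x).1.negOnePow : ℤ)) = 0 := by
  rcases phi_fst x with h | h <;> rw [h]
  · rw [Int.negOnePow_succ]; simp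
  · have h2 : (x.1 - 1 + 1).negOnePow = -(x.1 - 1).negOnePow := Int.negOnePow_succ _
    rw [show x.1 - 1 + 1 = x.1 by ring] at h2
    rw [h2]; simp

lemma phi_ne (x : ℤ × Multiset ℕ) : phi x ≠ x := by
  intro hc
  rcases phi_fst x with h | h <;> rw [hc] at h <;> omega

end EulerPent

/-- Euler's pentagonal number recurrence for the partition function. -/
theorem euler_pentagonal_recurrence (n : ℕ) (hn : 0 < n) :
    ∑ᶠ k : ℤ, (k.negOnePow : ℤ) * pZ ((n : ℤ) - k * (3 * k + 1) / 2) = 0 := by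
  classical
  open EulerPent in
  have hzero : ∀ k : ℤ, ¬ gk k ≤ (n:ℤ) →
      (k.negOnePow : ℤ) * pZ ((n : ℤ) - k * (3 * k + 1) / 2) = 0 := by
    intro k hk
    have : ¬ ((0:ℤ) ≤ (n : ℤ) - k * (3 * k + 1) / 2) := by
      change ¬ ((0:ℤ) ≤ (n : ℤ) - gk k)
      omega
    rw [pZ, if_neg this, mul_zero]
  have hsupp : Function.support
      (fun k : ℤ => (k.negOnePow : ℤ) * pZ ((n : ℤ) - k * (3 * k + 1) / 2))
      ⊆ ↑(Finset.Icc (-(n:ℤ)) (n:ℤ)) := by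
    intro k hk
    simp only [Function.mem_support] at hk
    simp only [Finset.coe_Icc, Set.mem_Icc]
    by_contra hmem
    apply hk
    apply hzero
    intro hle
    have := abs_le_of_gk_le hle
    omega
  rw [finsum_eq_finset_sum_of_support_subset _ hsupp]
  rw [← Finset.sum_filter_of_ne (p := fun k => gk k ≤ (n:ℤ))
    (fun k _ hf => by by_contra hc; exact hf (hzero k hc))]
  have hstep : ∀ k ∈ (Finset.Icc (-(n:ℤ)) (n:ℤ)).filter (fun k => gk k ≤ (n:ℤ)),
      (k.negOnePow : ℤ) * pZ ((n : ℤ) - k * (3 * k + 1) / 2)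
      = ∑ x ∈ (PF ((n:ℤ) - gk k).toNat).image (fun μ => (k, μ)), ((x.1.negOnePow : ℤ)) := by
    intro k hk
    rw [Finset.mem_filter] at hk
    rw [Finset.sum_image (fun a _ b _ h => by simpa using (Prod.ext_iff.1 h).2)]
    dsimp only
    rw [Finset.sum_const, card_PF]
    show (k.negOnePow : ℤ) * pZ ((n : ℤ) - gk k) = _
    rw [pZ, if_pos (by omega : (0:ℤ) ≤ (n : ℤ) - gk k), nsmul_eq_mul, mul_comm]
  rw [Finset.sum_congr rfl hstep]
  have hdisj : Set.PairwiseDisjoint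
      (↑((Finset.Icc (-(n:ℤ)) (n:ℤ)).filter (fun k => gk k ≤ (n:ℤ))))
      (fun k => (PF ((n:ℤ) - gk k).toNat).image (fun μ => (k, μ))) := by
    intro a _ b _ hab
    simp only [Finset.disjoint_left, Finset.mem_image]
    rintro x ⟨μ, _, rfl⟩ ⟨μ', _, hx⟩
    exact hab ((Prod.ext_iff.1 hx).1.symm)
  rw [← Finset.sum_biUnion hdisj]
  have hS : (((Finset.Icc (-(n:ℤ)) (n:ℤ)).filter (fun k => gk k ≤ (n:ℤ))).biUnion
      (fun k => (PF ((n:ℤ) - gk k).toNat).image (fun μ => (k, μ)))) = S n := rfl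
  rw [hS]
  exact Finset.sum_involution (fun x _ => phi x) (fun x _ => phi_sign x)
    (fun x _ _ => phi_ne x) (fun x hx => phi_mem hn hx) (fun x hx => phi_phi hn hx)
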